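/- Let H = (V,E) be a vertex-biconnected hypergraph with |V| ≥ 2 and |E| ≥ 2, and let e, f be two distinct (possibly parallel) hyperedges. Then there exist two vectors x₁, x₂ in the multi-tree family Ω(H) such that x₁ - 1_e + 1_f = x₂. -/

import Mathlib

open Finset
open scoped Classical

noncomputable section

variable {V E : Type*}

/-- The set of hyperedges meeting at least two parts of the partition `P` (the cut `δ(P)`). -/
def hcut [Fintype V] [DecidableEq V] [Fintype E] (edge : E → Finset V)
    (P : Finpartition (univ : Finset V)) : Finset E :=
  univ.filter fun e => ∃ p ∈ P.parts, ∃ q ∈ P.parts,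
    p ≠ q ∧ (edge e ∩ p).Nonempty ∧ (edge e ∩ q).Nonempty

/-- The hyperedges entirely contained in the vertex set `X`. -/
def edgesIn [DecidableEq V] [Fintype E] (edge : E → Finset V) (X : Finset V) : Finset E :=
  univ.filter fun e => edge e ⊆ X

/-- The strength `S(H)`. -/
def strength [Fintype V] [DecidableEq V] [Fintype E] (edge : E → Finset V) : ℝ :=
  sInf { r : ℝ | ∃ P : Finpartition (univ : Finset V), 2 ≤ P.parts.card ∧
    r = ((hcut edge P).card : ℝ) / ((P.parts.card : ℝ) - 1) }

/-- The weighted strength `S_σ(H)`. -/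
def strengthW [Fintype V] [DecidableEq V] [Fintype E] (σ : E → ℝ) (edge : E → Finset V) : ℝ :=
  sInf { r : ℝ | ∃ P : Finpartition (univ : Finset V), 2 ≤ P.parts.card ∧
    r = (∑ e ∈ hcut edge P, σ e) / ((P.parts.card : ℝ) - 1) }

/-- The fractional arboricity `D(H)`. -/
def arboricity [Fintype V] [DecidableEq V] [Fintype E] (edge : E → Finset V) : ℝ :=
  sSup { r : ℝ | ∃ X : Finset V, 2 ≤ X.card ∧
    r = ((edgesIn edge X).card : ℝ) / ((X.card : ℝ) - 1) }

/-- Connectivity of the subhypergraph induced by the vertex set `W`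
(only hyperedges contained in `W` are used). -/
def ConnectedIn (edge : E → Finset V) (W : Finset V) : Prop :=
  ∀ X ⊆ W, X.Nonempty → X ≠ W →
    ∃ e, edge e ⊆ W ∧ (edge e ∩ X).Nonempty ∧ ((edge e ∩ W) \ X).Nonempty

/-- Connectivity of the trace hypergraph on the vertex set `W`
(each hyperedge is replaced by its intersection with `W`, as in vertex deletion). -/
def ConnectedOn (edge : E → Finset V) (W : Finset V) : Prop :=
  ∀ X ⊆ W, X.Nonempty → X ≠ W →
    ∃ e, ((edge e ∩ W) ∩ X).Nonempty ∧ ((edge e ∩ W) \ X).Nonempty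

/-- A hypergraph is connected if every nonempty proper vertex subset is crossed by a hyperedge. -/
def HConnected [Fintype V] (edge : E → Finset V) : Prop :=
  ConnectedIn edge univ

/-- `H` is partition-connected if `|δ(P)| ≥ |P| - 1` for every partition `P` of `V`. -/
def PartitionConnected [Fintype V] [DecidableEq V] [Fintype E] (edge : E → Finset V) : Prop :=
  ∀ P : Finpartition (univ : Finset V), P.parts.card - 1 ≤ (hcut edge P).card

/-- A partition is feasible if each part induces a connected subhypergraph. -/
def Feasible [Fintype V] [DecidableEq V] (edge : E → Finset V) (P : Finpartition (univ : Finset V)) : Prop :=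
  ∀ p ∈ P.parts, ConnectedIn edge p

/-- The edges of the shrunk hypergraph `H_P`: vertices are the parts of `P`, and a hyperedge
becomes the set of parts it meets. -/
def shrunkEdge [Fintype V] [DecidableEq V] (edge : E → Finset V)
    (P : Finpartition (univ : Finset V)) (e : E) : Finset {p : Finset V // p ∈ P.parts} :=
  univ.filter fun p => (edge e ∩ p.1).Nonempty

/-- The shrunk hypergraph `H_P` is vertex-biconnected: it is connected and no single
vertex deletion disconnects it. -/
def ShrunkBiconnected [Fintype V] [DecidableEq V] [Fintype E] (edge : E → Finset V)
    (P : Finpartition (univ : Finset V)) : Prop :=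
  ConnectedIn (shrunkEdge edge P) univ ∧
  ∀ p : {p : Finset V // p ∈ P.parts}, ConnectedOn (shrunkEdge edge P) (univ \ {p})

/-- `F` is a hypertree: a hyperforest of size `|V| - 1`. -/
def IsHypertree [Fintype V] [DecidableEq V] (edge : E → Finset V) (F : Finset E) : Prop :=
  F.card = Fintype.card V - 1 ∧
  ∀ X : Finset V, X.Nonempty → (F.filter fun e => edge e ⊆ X).card ≤ X.card - 1

/-- `m` is the multiplicity vector of a multiset of hyperedges forming a hypertree on `V`. -/
def IsMultiTree [Fintype V] [DecidableEq V] [Fintype E] (edge : E → Finset V) (m : E → ℕ) : Prop :=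
  (∑ e, m e) = Fintype.card V - 1 ∧
  ∀ X : Finset V, X.Nonempty → (∑ e ∈ edgesIn edge X, m e) ≤ X.card - 1

/-- The multi-tree family `Ω(H)` as a set of usage vectors in `ℝ^E`. -/
def OmegaSet [Fintype V] [DecidableEq V] [Fintype E] (edge : E → Finset V) : Set (E → ℝ) :=
  { x | ∃ m : E → ℕ, IsMultiTree edge m ∧ x = fun e => (m e : ℝ) }

/-- The hypertree family `Γ(H)` as a set of (indicator) usage vectors in `ℝ^E`. -/
def GammaSet [Fintype V] [DecidableEq V] [Fintype E] (edge : E → Finset V) : Set (E → ℝ) :=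
  { x | ∃ F : Finset E, IsHypertree edge F ∧ x = fun e => if e ∈ F then (1 : ℝ) else 0 }

/-- The admissible set of a family of usage vectors. -/
def AdmSet [Fintype E] (G : Set (E → ℝ)) : Set (E → ℝ) :=
  { ρ | (∀ e, 0 ≤ ρ e) ∧ ∀ x ∈ G, 1 ≤ ∑ e, x e * ρ e }

/-- The weighted 1-modulus of a family of usage vectors. -/
def Mod1 [Fintype E] (σ : E → ℝ) (G : Set (E → ℝ)) : ℝ :=
  sInf { t : ℝ | ∃ ρ ∈ AdmSet G, t = ∑ e, σ e * ρ e }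

/-- `w` is an extreme point of `S`: it lies in `S` and is not the midpoint of two
distinct points of `S`. -/
def IsExtremePt [Fintype E] (S : Set (E → ℝ)) (w : E → ℝ) : Prop :=
  w ∈ S ∧ ∀ y ∈ S, ∀ z ∈ S, (∀ e, w e = (y e + z e) / 2) → y = z

/-- The rank function of the hypergraphic matroid `M(H)` (Frank et al.):
`r(F) = min { |V| - |P| + |δ_F(P)| }` over partitions `P` of `V`. -/
def hrank [Fintype V] [DecidableEq V] [Fintype E] [DecidableEq E]
    (edge : E → Finset V) (F : Finset E) : ℕ :=
  sInf { n : ℕ | ∃ P : Finpartition (univ : Finset V),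
    n = Fintype.card V - P.parts.card + (hcut edge P ∩ F).card }

/-- The (unweighted) strength of the hypergraphic matroid `M(H)`. -/
def mstrength [Fintype V] [DecidableEq V] [Fintype E] [DecidableEq E]
    (edge : E → Finset V) : ℝ :=
  sInf { r : ℝ | ∃ X : Finset E, hrank edge (univ \ X) < hrank edge univ ∧
    r = (X.card : ℝ) / ((hrank edge univ : ℝ) - (hrank edge (univ \ X) : ℝ)) }

/-- The fractional arboricity of the hypergraphic matroid `M(H)`. -/
def marboricity [Fintype V] [DecidableEq V] [Fintype E] [DecidableEq E]
    (edge : E → Finset V) : ℝ :=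
  sSup { r : ℝ | ∃ X : Finset E, 0 < hrank edge X ∧ r = (X.card : ℝ) / (hrank edge X : ℝ) }

end

set_option linter.unusedSectionVars false

section StmtAux
variable {V E : Type*} [Fintype V] [DecidableEq V] [Fintype E] [Nonempty E]

lemma exists_arb (edge : E → Finset V) {W : Finset V} (hW : ConnectedOn edge W)
    {r : V} (hr : r ∈ W) :
    ∃ (par : V → V) (φ : V → E) (ht : V → ℕ),
      (∀ x ∈ W, ht x < W.card) ∧
      ∀ x ∈ W, x ≠ r → par x ∈ W ∧ ht (par x) < ht x ∧
        x ∈ edge (φ x) ∧ par x ∈ edge (φ x) := by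
  suffices h : ∀ (n : ℕ) (S : Finset V), r ∈ S → S ⊆ W → (W \ S).card ≤ n →
      (∃ (par : V → V) (φ : V → E) (ht : V → ℕ),
        (∀ x ∈ S, ht x < S.card) ∧
        ∀ x ∈ S, x ≠ r → par x ∈ S ∧ ht (par x) < ht x ∧
          x ∈ edge (φ x) ∧ par x ∈ edge (φ x)) →
      (∃ (par : V → V) (φ : V → E) (ht : V → ℕ),
        (∀ x ∈ W, ht x < W.card) ∧
        ∀ x ∈ W, x ≠ r → par x ∈ W ∧ ht (par x) < ht x ∧
          x ∈ edge (φ x) ∧ par x ∈ edge (φ x)) by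
    refine h (W \ {r}).card {r} (mem_singleton_self r) (by simpa using hr) le_rfl ?_
    refine ⟨id, fun _ => Classical.arbitrary E, fun _ => 0, ?_, ?_⟩
    · intro x hx; rw [mem_singleton] at hx; subst hx; simp
    · intro x hx hxr; rw [mem_singleton] at hx; exact absurd hx hxr
  intro n
  induction n with
  | zero =>
    intro S hrS hSW hcard hpart
    have : W \ S = ∅ := card_eq_zero.mp (Nat.le_zero.mp hcard)
    have hWS : W = S := by
      apply Finset.Subset.antisymm _ hSW
      intro x hx
      by_contra hxS
      have : x ∈ W \ S := mem_sdiff.mpr ⟨hx, hxS⟩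
      simp [‹W \ S = ∅›] at this
    rw [hWS]; exact hpart
  | succ n ih =>
    intro S hrS hSW hcard hpart
    by_cases hSW' : S = W
    · subst hSW'; exact hpart
    · obtain ⟨g, h1, h2⟩ := hW S hSW ⟨r, hrS⟩ hSW'
      obtain ⟨x, hx⟩ := h1
      obtain ⟨y, hy⟩ := h2
      simp only [Finset.mem_inter, Finset.mem_sdiff] at hx hy
      obtain ⟨⟨hxg, hxW⟩, hxS⟩ := hx
      obtain ⟨⟨hyg, hyW⟩, hyS⟩ := hy
      obtain ⟨par, φ, ht, hht, hstr⟩ := hpart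
      have hxy : x ≠ y := fun h => hyS (h ▸ hxS)
      have hcard' : (W \ insert y S).card ≤ n := by
        have h1 : W \ insert y S = (W \ S).erase y := by
          ext z; simp [mem_sdiff, mem_insert, mem_erase]; tauto
        have h2 : y ∈ W \ S := mem_sdiff.mpr ⟨hyW, hyS⟩
        rw [h1, card_erase_of_mem h2]
        have : 0 < (W \ S).card := card_pos.mpr ⟨y, h2⟩
        omega
      refine ih (insert y S) (mem_insert_of_mem hrS) (insert_subset hyW hSW) hcard' ?_
      refine ⟨Function.update par y x, Function.update φ y g, Function.update ht y S.card, ?_, ?_⟩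
      · intro z hz
        rw [card_insert_of_notMem hyS]
        rcases mem_insert.mp hz with hz | hz
        · subst hz; rw [Function.update_self]; omega
        · have hzy : z ≠ y := fun h => hyS (h ▸ hz)
          rw [Function.update_of_ne hzy]
          exact Nat.lt_succ_of_lt (hht z hz)
      · intro z hz hzr
        rcases mem_insert.mp hz with hz | hz
        · subst hz
          rw [Function.update_self, Function.update_self, Function.update_self,
            Function.update_of_ne hxy]
          exact ⟨mem_insert_of_mem hxS, hht x hxS, hyg, hxg⟩
        · have hzy : z ≠ y := fun h => hyS (h ▸ hz)
          obtain ⟨hp1, hp2, hp3, hp4⟩ := hstr z hz hzr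
          have hpzy : par z ≠ y := fun h => hyS (h ▸ hp1)
          rw [Function.update_of_ne hzy, Function.update_of_ne hzy, Function.update_of_ne hpzy,
            Function.update_of_ne hzy]
          exact ⟨mem_insert_of_mem hp1, hp2, hp3, hp4⟩

lemma connectedOn_insert (edge : E → Finset V) {A : Finset V} (hA : ConnectedOn edge A)
    {w : V} {g₀ : E} (hw : w ∈ edge g₀) (hg : (edge g₀ ∩ A).Nonempty) :
    ConnectedOn edge (insert w A) := by
  by_cases hwA : w ∈ A
  · rwa [insert_eq_self.mpr hwA]
  intro X hX hXne hXneq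
  by_cases hwX : w ∈ X
  · by_cases hXw : X = {w}
    · subst hXw
      obtain ⟨z, hz⟩ := hg
      simp only [Finset.mem_inter] at hz
      refine ⟨g₀, ⟨w, ?_⟩, ⟨z, ?_⟩⟩
      · simp [hw]
      · simp only [Finset.mem_sdiff, Finset.mem_inter, Finset.mem_insert, Finset.mem_singleton]
        exact ⟨⟨hz.1, Or.inr hz.2⟩, fun h => hwA (h ▸ hz.2)⟩
    · have hXw' : (X \ {w}).Nonempty := by
        rw [sdiff_nonempty]
        intro h
        exact hXw (Finset.Subset.antisymm h (singleton_subset_iff.mpr hwX))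
      have hsub : X \ {w} ⊆ A := by
        intro z hz
        simp only [Finset.mem_sdiff, Finset.mem_singleton] at hz
        rcases Finset.mem_insert.mp (hX hz.1) with h | h
        · exact absurd h hz.2
        · exact h
      have hne : X \ {w} ≠ A := by
        intro h
        apply hXneq
        apply Finset.Subset.antisymm hX
        intro z hz
        rcases Finset.mem_insert.mp hz with h' | h'
        · exact h' ▸ hwX
        · rw [← h] at h'
          exact (Finset.mem_sdiff.mp h').1
      obtain ⟨g, h1, h2⟩ := hA (X \ {w}) hsub hXw' hne
      obtain ⟨p, hp⟩ := h1
      obtain ⟨q, hq⟩ := h2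
      simp only [Finset.mem_inter, Finset.mem_sdiff, Finset.mem_singleton] at hp hq
      refine ⟨g, ⟨p, ?_⟩, ⟨q, ?_⟩⟩
      · simp only [Finset.mem_inter, Finset.mem_insert]
        exact ⟨⟨hp.1.1, Or.inr hp.1.2⟩, hp.2.1⟩
      · simp only [Finset.mem_sdiff, Finset.mem_inter, Finset.mem_insert]
        refine ⟨⟨hq.1.1, Or.inr hq.1.2⟩, ?_⟩
        intro hqX
        have : q ≠ w := fun h => hwA (h ▸ hq.1.2)
        exact hq.2 ⟨hqX, this⟩
  · have hXA : X ⊆ A := by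
      intro z hz
      rcases Finset.mem_insert.mp (hX hz) with h | h
      · exact absurd (h ▸ hz) hwX
      · exact h
    by_cases hXA' : X = A
    · subst hXA'
      obtain ⟨z, hz⟩ := hg
      simp only [Finset.mem_inter] at hz
      refine ⟨g₀, ⟨z, ?_⟩, ⟨w, ?_⟩⟩
      · simp only [Finset.mem_inter, Finset.mem_insert]
        exact ⟨⟨hz.1, Or.inr hz.2⟩, hz.2⟩
      · simp only [Finset.mem_sdiff, Finset.mem_inter, Finset.mem_insert]
        exact ⟨⟨hw, Or.inl trivial⟩, hwX⟩
    · obtain ⟨g, h1, h2⟩ := hA X hXA hXne hXA'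
      obtain ⟨p, hp⟩ := h1
      obtain ⟨q, hq⟩ := h2
      simp only [Finset.mem_inter, Finset.mem_sdiff] at hp hq
      refine ⟨g, ⟨p, ?_⟩, ⟨q, ?_⟩⟩
      · simp only [Finset.mem_inter, Finset.mem_insert]
        exact ⟨⟨hp.1.1, Or.inr hp.1.2⟩, hp.2⟩
      · simp only [Finset.mem_sdiff, Finset.mem_inter, Finset.mem_insert]
        exact ⟨⟨hq.1.1, Or.inr hq.1.2⟩, hq.2⟩

lemma exists_movable (edge : E → Finset V)
    (hbi : ∀ x : V, ConnectedOn edge ((univ : Finset V) \ {x}))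
    {B : Finset V} (hB : ConnectedOn edge B)
    (hA : ((univ : Finset V) \ B).Nonempty) :
    ∀ (n : ℕ) (c : V) (C : Finset V), c ∈ B → C ⊆ B → C.Nonempty → c ∉ C → C.card ≤ n →
      (∀ g, (edge g ∩ C).Nonempty → edge g ∩ B ⊆ C ∪ {c}) →
      ∃ w ∈ C, (∃ g, w ∈ edge g ∧ ((edge g) \ B).Nonempty) ∧ ConnectedOn edge (B \ {w}) := by
  intro n
  induction n with
  | zero =>
    intro c C _ _ hCne _ hcard _
    exact absurd (card_pos.mpr hCne) (by omega)
  | succ n ih =>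
    intro c C hcB hCB hCne hcC hcard hclo
    -- Step 1: find an A-adjacent vertex w in C
    have hCsub : C ⊆ univ \ {c} := by
      intro z hz
      simp only [Finset.mem_sdiff, Finset.mem_singleton, Finset.mem_univ, true_and]
      exact fun h => hcC (h ▸ hz)
    obtain ⟨a0, ha0⟩ := hA
    simp only [Finset.mem_sdiff, Finset.mem_univ, true_and] at ha0
    have hCneq : C ≠ univ \ {c} := by
      intro h
      have : a0 ∈ C := by
        rw [h]
        simp only [Finset.mem_sdiff, Finset.mem_singleton, Finset.mem_univ, true_and]
        exact fun hh => ha0 (hh ▸ hcB)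
      exact ha0 (hCB this)
    obtain ⟨g₁, h1, h2⟩ := hbi c C hCsub hCne hCneq
    obtain ⟨w, hw⟩ := h1
    obtain ⟨y, hy⟩ := h2
    simp only [Finset.mem_inter, Finset.mem_sdiff, Finset.mem_singleton, Finset.mem_univ,
      true_and] at hw hy
    obtain ⟨⟨hwg, hwc⟩, hwC⟩ := hw
    obtain ⟨⟨hyg, hyc⟩, hyC⟩ := hy
    have hyB : y ∉ B := by
      intro hyB
      have := hclo g₁ ⟨w, Finset.mem_inter.mpr ⟨hwg, hwC⟩⟩ (Finset.mem_inter.mpr ⟨hyg, hyB⟩)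
      simp only [Finset.mem_union, Finset.mem_singleton] at this
      rcases this with h | h
      · exact hyC h
      · exact hyc h
    have hMadj : ∃ g, w ∈ edge g ∧ ((edge g) \ B).Nonempty :=
      ⟨g₁, hwg, ⟨y, Finset.mem_sdiff.mpr ⟨hyg, hyB⟩⟩⟩
    by_cases hcon : ConnectedOn edge (B \ {w})
    · exact ⟨w, hwC, hMadj, hcon⟩
    -- Step 2: a violating cut X for B \ {w}
    rw [ConnectedOn] at hcon
    push_neg at hcon
    obtain ⟨X, hXsub, hXne, hXneq, hnc⟩ := hcon
    have hwB : w ∈ B := hCB hwC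
    have hX'ne : ((B \ {w}) \ X).Nonempty := by
      rw [sdiff_nonempty]
      exact fun h => hXneq (Finset.Subset.antisymm hXsub h)
    set X' := (B \ {w}) \ X with hX'def
    have hnc' : ∀ g, ((edge g ∩ (B \ {w})) ∩ X).Nonempty →
        ((edge g ∩ (B \ {w})) \ X) = ∅ := by
      intro g hg
      rw [← Finset.not_nonempty_iff_eq_empty]
      simp only [Finset.Nonempty, Finset.mem_inter, Finset.mem_sdiff,
        Finset.mem_singleton] at hnc hg ⊢
      simpa only [Finset.Nonempty, Finset.mem_inter, Finset.mem_sdiff,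
        Finset.mem_singleton] using Finset.not_nonempty_iff_eq_empty.mpr (hnc g hg)
    have hclosedX : ∀ g, (edge g ∩ X).Nonempty → edge g ∩ B ⊆ X ∪ {w} := by
      intro g hg t ht
      obtain ⟨z, hz⟩ := hg
      simp only [Finset.mem_inter] at hz ht
      have hzBw : z ∈ B \ {w} := hXsub hz.2
      have hempty := hnc' g ⟨z, by simp only [Finset.mem_inter]; exact ⟨⟨hz.1, hzBw⟩, hz.2⟩⟩
      simp only [Finset.mem_union, Finset.mem_singleton]
      by_cases htw : t = w
      · exact Or.inr htw
      · left
        by_contra htX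
        have : t ∈ (edge g ∩ (B \ {w})) \ X := by
          simp only [Finset.mem_sdiff, Finset.mem_inter, Finset.mem_singleton]
          exact ⟨⟨ht.1, ht.2, htw⟩, htX⟩
        rw [hempty] at this
        exact absurd this (Finset.notMem_empty t)
    have hclosedX' : ∀ g, (edge g ∩ X').Nonempty → edge g ∩ B ⊆ X' ∪ {w} := by
      intro g hg t ht
      obtain ⟨z, hz⟩ := hg
      rw [Finset.mem_inter, hX'def, Finset.mem_sdiff] at hz
      simp only [Finset.mem_inter] at ht
      simp only [Finset.mem_union, Finset.mem_singleton]
      by_cases htw : t = w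
      · exact Or.inr htw
      · left
        rw [hX'def, Finset.mem_sdiff]
        have htBw : t ∈ B \ {w} := Finset.mem_sdiff.mpr ⟨ht.2, by simpa using htw⟩
        refine ⟨htBw, ?_⟩
        intro htX
        have hempty := hnc' g ⟨t, by simp only [Finset.mem_inter]; exact ⟨⟨ht.1, htBw⟩, htX⟩⟩
        have : z ∈ (edge g ∩ (B \ {w})) \ X := by
          simp only [Finset.mem_sdiff, Finset.mem_inter]
          exact ⟨⟨hz.1, Finset.mem_sdiff.mp hz.2.1⟩, hz.2.2⟩
        rw [hempty] at this
        exact absurd this (Finset.notMem_empty z)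
    have hcBw : c ∈ B \ {w} := by
      refine Finset.mem_sdiff.mpr ⟨hcB, ?_⟩
      simp only [Finset.mem_singleton]
      exact fun h => hcC (h ▸ hwC)
    -- choose the side D not containing c
    obtain ⟨D, hDne, hDBw, hcD, hclosedD⟩ :
        ∃ D : Finset V, D.Nonempty ∧ D ⊆ B \ {w} ∧ c ∉ D ∧
          (∀ g, (edge g ∩ D).Nonempty → edge g ∩ B ⊆ D ∪ {w}) := by
      by_cases hc : c ∈ X
      · exact ⟨X', hX'ne, sdiff_subset, fun h => (Finset.mem_sdiff.mp h).2 hc, hclosedX'⟩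
      · exact ⟨X, hXne, hXsub, hc, hclosedX⟩
    have hwD : w ∉ D := fun h => (Finset.mem_sdiff.mp (hDBw h)).2 (Finset.mem_singleton_self w)
    have hDB : D ⊆ B := fun z hz => (Finset.mem_sdiff.mp (hDBw hz)).1
    -- Step 3: D ⊆ C
    have hDC : D ⊆ C := by
      intro d hd
      by_contra hdC
      set Y := D \ C with hYdef
      have hYne : Y.Nonempty := ⟨d, Finset.mem_sdiff.mpr ⟨hd, hdC⟩⟩
      have hYclosed : ∀ g, (edge g ∩ Y).Nonempty → edge g ∩ B ⊆ Y := by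
        intro g hg t ht
        obtain ⟨z, hz⟩ := hg
        rw [Finset.mem_inter, hYdef, Finset.mem_sdiff] at hz
        have hsubD := hclosedD g ⟨z, Finset.mem_inter.mpr ⟨hz.1, hz.2.1⟩⟩
        have hgC : ¬ (edge g ∩ C).Nonempty := by
          intro hgC
          have hzB := hsubD (Finset.mem_inter.mpr ⟨hz.1, hDB hz.2.1⟩)
          have := hclo g hgC (Finset.mem_inter.mpr ⟨hz.1, hDB hz.2.1⟩)
          simp only [Finset.mem_union, Finset.mem_singleton] at this
          rcases this with h | h
          · exact hz.2.2 h
          · exact hcD (h ▸ hz.2.1)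
        have htD := hsubD ht
        simp only [Finset.mem_union, Finset.mem_singleton] at htD
        rcases htD with h | h
        · rw [hYdef, Finset.mem_sdiff]
          refine ⟨h, fun htC => hgC ⟨t, Finset.mem_inter.mpr ⟨(Finset.mem_inter.mp ht).1, htC⟩⟩⟩
        · exfalso
          exact hgC ⟨w, Finset.mem_inter.mpr ⟨h ▸ (Finset.mem_inter.mp ht).1, hwC⟩⟩
      have hYB : Y ⊆ B := fun z hz => hDB (Finset.mem_sdiff.mp hz).1
      have hYneq : Y ≠ B := by
        intro h
        have : w ∈ Y := h ▸ hwB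
        exact hwD (Finset.mem_sdiff.mp this).1
      obtain ⟨g, h1, h2⟩ := hB Y hYB hYne hYneq
      obtain ⟨p, hp⟩ := h1
      obtain ⟨q, hq⟩ := h2
      simp only [Finset.mem_inter, Finset.mem_sdiff] at hp hq
      have := hYclosed g ⟨p, Finset.mem_inter.mpr ⟨hp.1.1, hp.2⟩⟩
        (Finset.mem_inter.mpr ⟨hq.1.1, hq.1.2⟩)
      exact hq.2 this
    -- Step 4: recurse
    have hDcard : D.card ≤ n := by
      have : D ⊂ C := ⟨hDC, fun h => hwD (h hwC)⟩
      have := card_lt_card this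
      omega
    obtain ⟨w', hw'D, hrest⟩ := ih w D hwB hDB hDne hwD hDcard hclosedD
    exact ⟨w', hDC hw'D, hrest⟩

lemma exists_good_partition (edge : E → Finset V)
    (hbi : ∀ x : V, ConnectedOn edge ((univ : Finset V) \ {x}))
    {u v : V} (huv : u ≠ v) {f : E} (hf : 2 ≤ (edge f).card) :
    ∃ A : Finset V, u ∈ A ∧ v ∉ A ∧ ConnectedOn edge A ∧
      ConnectedOn edge ((univ : Finset V) \ A) ∧
      (edge f ∩ A).Nonempty ∧ (edge f ∩ ((univ : Finset V) \ A)).Nonempty := by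
  set P : Finset V → Prop := fun A => u ∈ A ∧ v ∉ A ∧ ConnectedOn edge A ∧
      ConnectedOn edge ((univ : Finset V) \ A) ∧
      (edge f ∩ ((univ : Finset V) \ A)).Nonempty with hPdef
  have hpair : ∀ z : V, ∃ p ∈ edge f, p ≠ z := by
    intro z
    obtain ⟨p, hp, q, hq, hpq⟩ := Finset.one_lt_card.mp hf
    by_cases hpz : p = z
    · exact ⟨q, hq, fun h => hpq (hpz.trans h.symm)⟩
    · exact ⟨p, hp, hpz⟩
  have h0 : P {u} := by
    refine ⟨mem_singleton_self u, by simpa using huv.symm, ?_, ?_, ?_⟩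
    · intro X hX hXne hXneq
      rcases Finset.subset_singleton_iff.mp hX with h | h
      · exact absurd h (Finset.nonempty_iff_ne_empty.mp hXne)
      · exact absurd h hXneq
    · exact hbi u
    · obtain ⟨p, hp, hpu⟩ := hpair u
      exact ⟨p, Finset.mem_inter.mpr ⟨hp, by simp [hpu]⟩⟩
  have hsne : (Finset.univ.filter P).Nonempty :=
    ⟨{u}, Finset.mem_filter.mpr ⟨Finset.mem_univ _, h0⟩⟩
  obtain ⟨A, hAs, hAmax⟩ := Finset.exists_max_image (Finset.univ.filter P) Finset.card hsne
  obtain ⟨huA, hvA, hconA, hconB, hfB⟩ := (Finset.mem_filter.mp hAs).2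
  refine ⟨A, huA, hvA, hconA, hconB, ?_, hfB⟩
  by_contra hfA
  have hfB' : ∀ z ∈ edge f, z ∉ A := by
    intro z hz hzA
    exact hfA ⟨z, Finset.mem_inter.mpr ⟨hz, hzA⟩⟩
  have hvB : v ∈ (univ : Finset V) \ A := Finset.mem_sdiff.mpr ⟨Finset.mem_univ v, hvA⟩
  -- C := (univ \ A) \ {v}
  obtain ⟨p0, hp0f, hp0v⟩ := hpair v
  have hp0B : p0 ∈ (univ : Finset V) \ A :=
    Finset.mem_sdiff.mpr ⟨Finset.mem_univ _, hfB' p0 hp0f⟩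
  have hCne : (((univ : Finset V) \ A) \ {v}).Nonempty :=
    ⟨p0, Finset.mem_sdiff.mpr ⟨hp0B, by simpa using hp0v⟩⟩
  have hAne : ((univ : Finset V) \ ((univ : Finset V) \ A)).Nonempty := by
    refine ⟨u, ?_⟩
    simp only [Finset.mem_sdiff, Finset.mem_univ, true_and, not_and, not_not]
    exact huA
  obtain ⟨w, hwC, ⟨g₁, hwg₁, hg₁A⟩, hconB'⟩ :=
    exists_movable edge hbi hconB hAne ((((univ : Finset V) \ A) \ {v}).card) v
      (((univ : Finset V) \ A) \ {v}) hvB sdiff_subset hCne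
      (fun h => (Finset.mem_sdiff.mp h).2 (mem_singleton_self v)) le_rfl
      (by
        intro g _
        intro t ht
        simp only [Finset.mem_union, Finset.mem_sdiff, Finset.mem_singleton]
        have := Finset.mem_inter.mp ht
        by_cases htv : t = v
        · exact Or.inr htv
        · exact Or.inl ⟨Finset.mem_sdiff.mp this.2, htv⟩)
  simp only [Finset.mem_sdiff, Finset.mem_singleton] at hwC
  obtain ⟨hwB, hwv⟩ := hwC
  have hwA : w ∉ A := hwB.2
  -- the adjacency witness lands in A
  obtain ⟨y, hy⟩ := hg₁A
  simp only [Finset.mem_sdiff, Finset.mem_univ, true_and, not_and, not_not] at hy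
  have hyg₁ : y ∈ edge g₁ := hy.1
  have hyA : y ∈ A := hy.2
  -- build the bigger partition
  have hPA' : P (insert w A) := by
    refine ⟨Finset.mem_insert_of_mem huA, ?_, ?_, ?_, ?_⟩
    · simp only [Finset.mem_insert]
      rintro (h | h)
      · exact hwv h.symm
      · exact hvA h
    · exact connectedOn_insert edge hconA hwg₁ ⟨y, Finset.mem_inter.mpr ⟨hyg₁, hyA⟩⟩
    · have : (univ : Finset V) \ insert w A = ((univ : Finset V) \ A) \ {w} := by
        ext z
        simp only [Finset.mem_sdiff, Finset.mem_insert, Finset.mem_singleton, Finset.mem_univ,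
          true_and]
        tauto
      rw [this]
      exact hconB'
    · obtain ⟨p1, hp1f, hp1w⟩ := hpair w
      refine ⟨p1, Finset.mem_inter.mpr ⟨hp1f, ?_⟩⟩
      simp only [Finset.mem_sdiff, Finset.mem_insert, Finset.mem_univ, true_and]
      push_neg
      exact ⟨hp1w, hfB' p1 hp1f⟩
  have hcard : A.card < (insert w A).card := by
    rw [Finset.card_insert_of_notMem hwA]
    omega
  have := hAmax (insert w A) (Finset.mem_filter.mpr ⟨Finset.mem_univ _, hPA'⟩)
  omega

end StmtAux

/-- In a loopless vertex-biconnected hypergraph with `|V| ≥ 2` and `|E| ≥ 2`,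
for any two distinct (possibly parallel) hyperedges `e, f` there are multi-trees
`x₁, x₂ ∈ Ω(H)` with `x₁ - 1_e + 1_f = x₂`. -/
theorem stmt6 {V E : Type*} [Fintype V] [DecidableEq V] [Fintype E] [DecidableEq E]
    (edge : E → Finset V) (hloopless : ∀ g, 2 ≤ (edge g).card)
    (hconn : HConnected edge)
    (hbiconn : ∀ v : V, ConnectedOn edge ((univ : Finset V) \ {v}))
    (hV : 2 ≤ Fintype.card V) (hE : 2 ≤ Fintype.card E)
    (e f : E) (hef : e ≠ f) :
    ∃ m₁ m₂ : E → ℕ, IsMultiTree edge m₁ ∧ IsMultiTree edge m₂ ∧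
      ∀ g : E, (m₁ g : ℤ) - (if g = e then 1 else 0) + (if g = f then 1 else 0) = (m₂ g : ℤ) := by
  
  have hNE : Nonempty E := ⟨e⟩
  obtain ⟨u, hu, v, hv, huv⟩ := Finset.one_lt_card.mp (hloopless e)
  obtain ⟨A, huA, hvA, hconA, hconB, hfA, hfB⟩ :=
    exists_good_partition edge hbiconn huv (hloopless f)
  set B := (univ : Finset V) \ A with hBdef
  have hvB : v ∈ B := Finset.mem_sdiff.mpr ⟨Finset.mem_univ v, hvA⟩
  obtain ⟨a, ha⟩ := hfA
  obtain ⟨b, hb⟩ := hfB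
  simp only [Finset.mem_inter] at ha hb
  obtain ⟨parA, φA, htA, htAbd, hstrA⟩ := exists_arb edge hconA huA
  obtain ⟨parB, φB, htB, htBbd, hstrB⟩ := exists_arb edge hconB hvB
  set par : V → V := fun x => if x = u then v else if x ∈ A then parA x else parB x with hpardef
  set φ : V → E := fun x => if x = u then e else if x ∈ A then φA x else φB x with hφdef
  set ht : V → ℕ := fun x => if x ∈ A then htA x + B.card + 1 else htB x with hhtdef
  have hxB : ∀ x : V, x ∉ A → x ∈ B := fun x hx => Finset.mem_sdiff.mpr ⟨Finset.mem_univ x, hx⟩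
  have hBA : ∀ x : V, x ∈ B → x ∉ A := fun x hx => (Finset.mem_sdiff.mp hx).2
  have hφu : φ u = e := by simp [hφdef]
  have key : ∀ x : V, x ≠ v → x ∈ edge (φ x) ∧ par x ∈ edge (φ x) ∧ ht (par x) < ht x ∧
      (x ∈ A → x ≠ u → par x ∈ A) ∧ (x ∉ A → par x ∉ A) := by
    intro x hxv
    by_cases hxu : x = u
    · subst hxu
      have h1 : φ x = e := by simp [hφdef]
      have h2 : par x = v := by simp [hpardef]
      have h3 : ht x = htA x + B.card + 1 := by simp [hhtdef, huA]
      have h4 : ht v = htB v := by simp [hhtdef, hvA]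
      refine ⟨h1 ▸ hu, by rw [h1, h2]; exact hv, ?_, fun _ h => absurd rfl h, fun h => absurd huA h⟩
      rw [h2, h3, h4]
      have := htBbd v hvB
      omega
    · by_cases hxA : x ∈ A
      · obtain ⟨hp1, hp2, hp3, hp4⟩ := hstrA x hxA hxu
        have h1 : φ x = φA x := by simp [hφdef, hxu, hxA]
        have h2 : par x = parA x := by simp [hpardef, hxu, hxA]
        have h3 : ht x = htA x + B.card + 1 := by simp [hhtdef, hxA]
        have h4 : ht (parA x) = htA (parA x) + B.card + 1 := by simp [hhtdef, hp1]
        refine ⟨h1 ▸ hp3, by rw [h1, h2]; exact hp4, ?_, fun _ _ => h2 ▸ hp1, fun h => absurd hxA h⟩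
        rw [h2, h3, h4]; omega
      · have hxB' : x ∈ B := hxB x hxA
        obtain ⟨hp1, hp2, hp3, hp4⟩ := hstrB x hxB' hxv
        have hpA : parB x ∉ A := hBA _ hp1
        have h1 : φ x = φB x := by simp [hφdef, hxu, hxA]
        have h2 : par x = parB x := by simp [hpardef, hxu, hxA]
        have h3 : ht x = htB x := by simp [hhtdef, hxA]
        have h4 : ht (parB x) = htB (parB x) := by simp [hhtdef, hpA]
        refine ⟨h1 ▸ hp3, by rw [h1, h2]; exact hp4, ?_, fun h _ => absurd h hxA,
          fun _ => h2 ▸ hpA⟩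
        rw [h2, h3, h4]; omega
  set m₁ : E → ℕ := fun g => ((univ.erase v).filter fun x => φ x = g).card with hm₁def
  -- fiberwise sums
  have hsum₁ : ∑ g : E, m₁ g = Fintype.card V - 1 := by
    have := (Finset.card_eq_sum_card_fiberwise
      (f := φ) (s := univ.erase v) (t := (univ : Finset E))
      (fun x _ => Finset.mem_univ (φ x)))
    rw [hm₁def, ← this, Finset.card_erase_of_mem (Finset.mem_univ v), Finset.card_univ]
  have hsumX : ∀ X : Finset V, ∑ g ∈ edgesIn edge X, m₁ g
      = ((univ.erase v).filter fun x => edge (φ x) ⊆ X).card := by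
    intro X
    rw [Finset.card_eq_sum_card_fiberwise
      (f := φ) (t := edgesIn edge X) (fun x hx => by
        simp only [Finset.mem_coe, Finset.mem_filter] at hx
        exact Finset.mem_filter.mpr ⟨Finset.mem_univ _, hx.2⟩)]
    apply Finset.sum_congr rfl
    intro g hg
    have hgX : edge g ⊆ X := by
      have := Finset.mem_filter.mp hg
      exact this.2
    rw [hm₁def]
    apply congrArg Finset.card
    ext x
    simp only [Finset.mem_filter, Finset.mem_erase]
    constructor
    · rintro ⟨h1, h3⟩
      exact ⟨⟨h1, by rw [h3]; exact hgX⟩, h3⟩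
    · rintro ⟨⟨h1, _⟩, h3⟩
      exact ⟨h1, h3⟩
  -- one-deficiency bound
  have hdef1 : ∀ X : Finset V, X.Nonempty →
      ((univ.erase v).filter fun x => edge (φ x) ⊆ X).card + 1 ≤ X.card := by
    intro X hX
    obtain ⟨x₀, hx₀X, hx₀min⟩ := Finset.exists_min_image X ht hX
    have hsub : ((univ.erase v).filter fun x => edge (φ x) ⊆ X) ⊆ X.erase x₀ := by
      intro x hx
      simp only [Finset.mem_filter, Finset.mem_erase, Finset.mem_univ, true_and, and_true] at hx
      obtain ⟨hxv, hxE⟩ := hx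
      obtain ⟨h1, h2, h3, _, _⟩ := key x hxv
      have hxX : x ∈ X := hxE h1
      refine Finset.mem_erase.mpr ⟨?_, hxX⟩
      intro hxx₀
      subst hxx₀
      have hm := hx₀min (par x) (hxE h2)
      omega
    have := Finset.card_le_card hsub
    rw [Finset.card_erase_of_mem hx₀X] at this
    have : 0 < X.card := Finset.card_pos.mpr hX
    omega
  -- two-deficiency bound
  have hdef2 : ∀ X : Finset V, edge f ⊆ X → ¬ (edge e ⊆ X) →
      ((univ.erase v).filter fun x => edge (φ x) ⊆ X).card + 2 ≤ X.card := by
    intro X hfX heX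
    obtain ⟨xA, hxA', hxAmin⟩ := Finset.exists_min_image (X ∩ A) ht
      ⟨a, Finset.mem_inter.mpr ⟨hfX ha.1, ha.2⟩⟩
    obtain ⟨xB, hxB', hxBmin⟩ := Finset.exists_min_image (X ∩ B) ht
      ⟨b, Finset.mem_inter.mpr ⟨hfX hb.1, hb.2⟩⟩
    simp only [Finset.mem_inter] at hxA' hxB'
    have hAneB : xA ≠ xB := fun h => (hBA xB hxB'.2) (h ▸ hxA'.2)
    have hsub : ((univ.erase v).filter fun x => edge (φ x) ⊆ X) ⊆ (X.erase xA).erase xB := by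
      intro x hx
      simp only [Finset.mem_filter, Finset.mem_erase, Finset.mem_univ, true_and, and_true] at hx
      obtain ⟨hxv, hxE⟩ := hx
      obtain ⟨h1, h2, h3, h4, h5⟩ := key x hxv
      have hxX : x ∈ X := hxE h1
      have hpX : par x ∈ X := hxE h2
      refine Finset.mem_erase.mpr ⟨?_, Finset.mem_erase.mpr ⟨?_, hxX⟩⟩
      · intro hxB0
        subst hxB0
        have hxnA : x ∉ A := hBA x hxB'.2
        have hpB : par x ∈ B := hxB _ (h5 hxnA)
        have := hxBmin (par x) (Finset.mem_inter.mpr ⟨hpX, hpB⟩)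
        omega
      · intro hxA0
        subst hxA0
        by_cases hxu : x = u
        · subst hxu
          rw [hφu] at hxE
          exact heX hxE
        · have hpA : par x ∈ A := h4 hxA'.2 hxu
          have := hxAmin (par x) (Finset.mem_inter.mpr ⟨hpX, hpA⟩)
          omega
    have hcard := Finset.card_le_card hsub
    have hxBe : xB ∈ X.erase xA := Finset.mem_erase.mpr ⟨fun h => hAneB h.symm, hxB'.1⟩
    rw [Finset.card_erase_of_mem hxBe, Finset.card_erase_of_mem hxA'.1] at hcard
    have h1 : 0 < X.card := Finset.card_pos.mpr ⟨xA, hxA'.1⟩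
    have h2 : 1 < X.card := Finset.one_lt_card.mpr ⟨xA, hxA'.1, xB, hxB'.1, hAneB⟩
    omega
  -- m₁ is a multitree
  have hmt₁ : IsMultiTree edge m₁ := by
    refine ⟨hsum₁, ?_⟩
    intro X hXne
    rw [hsumX]
    have := hdef1 X hXne
    omega
  have hm₁e : 1 ≤ m₁ e := by
    rw [hm₁def]
    refine Finset.card_pos.mpr ⟨u, ?_⟩
    simp only [Finset.mem_filter, Finset.mem_erase, Finset.mem_univ, true_and, and_true]
    exact ⟨huv, hφu⟩
  set m₂ : E → ℕ := fun g => if g = e then m₁ g - 1 else if g = f then m₁ g + 1 else m₁ g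
    with hm₂def
  have heq : ∀ g : E, (m₁ g : ℤ) - (if g = e then 1 else 0) + (if g = f then 1 else 0)
      = (m₂ g : ℤ) := by
    intro g
    by_cases hg : g = e
    · subst hg
      have h2 : m₂ g = m₁ g - 1 := by simp [hm₂def]
      have hgf : g ≠ f := hef
      rw [h2, if_pos rfl, if_neg hgf]
      omega
    · by_cases hg' : g = f
      · subst hg'
        have h2 : m₂ g = m₁ g + 1 := by simp [hm₂def, hg]
        rw [h2, if_pos rfl, if_neg hg]
        omega
      · have h2 : m₂ g = m₁ g := by simp [hm₂def, hg, hg']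
        rw [h2, if_neg hg, if_neg hg']
        omega
  refine ⟨m₁, m₂, hmt₁, ⟨?_, ?_⟩, heq⟩
  · -- sum of m₂
    have h1 : (∑ g : E, (m₂ g : ℤ)) = ∑ g : E, (m₁ g : ℤ) := by
      rw [Finset.sum_congr rfl (fun g _ => (heq g).symm)]
      rw [Finset.sum_add_distrib, Finset.sum_sub_distrib]
      simp [Finset.sum_ite_eq']
    have h2 : ∑ g : E, m₂ g = ∑ g : E, m₁ g := by
      have := h1
      push_cast at this
      exact_mod_cast this
    rw [h2, hsum₁]
  · -- bound of m₂
    intro X hXne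
    have hXc : 1 ≤ X.card := Finset.card_pos.mpr hXne
    have hsplit : (∑ g ∈ edgesIn edge X, (m₂ g : ℤ))
        = (∑ g ∈ edgesIn edge X, (m₁ g : ℤ))
          - (if e ∈ edgesIn edge X then 1 else 0)
          + (if f ∈ edgesIn edge X then 1 else 0) := by
      rw [Finset.sum_congr rfl (fun g _ => (heq g).symm)]
      rw [Finset.sum_add_distrib, Finset.sum_sub_distrib]
      rw [Finset.sum_ite_eq' (edgesIn edge X) e (fun _ => (1 : ℤ)),
        Finset.sum_ite_eq' (edgesIn edge X) f (fun _ => (1 : ℤ))]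
    have hcast : (∑ g ∈ edgesIn edge X, (m₁ g : ℤ)) = ((∑ g ∈ edgesIn edge X, m₁ g : ℕ) : ℤ) := by
      push_cast; ring
    have hgoal : (∑ g ∈ edgesIn edge X, (m₂ g : ℤ)) + 1 ≤ (X.card : ℤ) := by
      rw [hsplit, hcast, hsumX]
      by_cases heX : e ∈ edgesIn edge X
      · have h1 := hdef1 X hXne
        rw [if_pos heX]
        by_cases hfX : f ∈ edgesIn edge X
        · rw [if_pos hfX]; push_cast; omega
        · rw [if_neg hfX]; push_cast; omega
      · rw [if_neg heX]
        by_cases hfX : f ∈ edgesIn edge X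
        · rw [if_pos hfX]
          have hfsub : edge f ⊆ X := by
            have := Finset.mem_filter.mp hfX
            exact this.2
          have hesub : ¬ (edge e ⊆ X) := by
            intro h
            exact heX (Finset.mem_filter.mpr ⟨Finset.mem_univ _, h⟩)
          have h2 := hdef2 X hfsub hesub
          push_cast; omega
        · rw [if_neg hfX]
          have h1 := hdef1 X hXne
          push_cast; omega
    have hfin : (∑ g ∈ edgesIn edge X, m₂ g) + 1 ≤ X.card := by
      have : ((∑ g ∈ edgesIn edge X, m₂ g : ℕ) : ℤ) + 1 ≤ (X.card : ℤ) := by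
        rw [Nat.cast_sum]
        exact hgoal
      exact_mod_cast this
    omega
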